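/- For variables $x_1,\dots,x_N$ and integers $n_1,\dots,n_N$, the following identity of rational functions holds: $\prod_{l=2}^N \frac{t^{n_l} x_1 - t^{n_1} x_l}{x_1 - x_l} = t^{\sum_i n_i}\Big( t^{-n_1}\prod_{l=2}^N \frac{x_1 - t^{n_1} x_l}{x_1 - x_l} + \sum_{j=2}^N t^{-n_j}\frac{(t^{n_j}-1)x_j}{x_1 - x_j} \prod_{l=2, l\neq j}^N \frac{x_j - t^{n_j} x_l}{t^{n_l} x_j - t^{n_j} x_l}\cdot\frac{t^{n_l} x_1 - t^{n_1} x_l}{x_1 - x_l}\Big)$. -/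

import Mathlib

theorem core_pf {K : Type*} [Field K] (y b : ℕ → K) (s : Finset ℕ)
    (hdist : ∀ j ∈ s, ∀ l ∈ s, j ≠ l → y j ≠ y l) (z : K) :
    ∏ l ∈ s, (z - b l) = ∏ l ∈ s, (z - y l)
      + ∑ j ∈ s, (y j - b j) * (∏ l ∈ s.erase j, (y j - b l)) *
          (∏ l ∈ s.erase j, (z - y l)) / (∏ l ∈ s.erase j, (y j - y l)) := by
  induction s using Finset.induction_on generalizing z with
  | empty => simp
  | @insert a s ha IH =>
    have hdists : ∀ j ∈ s, ∀ l ∈ s, j ≠ l → y j ≠ y l := fun j hj l hl hjl =>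
      hdist j (Finset.mem_insert_of_mem hj) l (Finset.mem_insert_of_mem hl) hjl
    have hya : ∀ l ∈ s, y a - y l ≠ 0 := fun l hl =>
      sub_ne_zero.mpr (hdist a (Finset.mem_insert_self a s) l (Finset.mem_insert_of_mem hl)
        (fun h => ha (h ▸ hl)))
    have hNa : (∏ l ∈ s, (y a - y l)) ≠ 0 := Finset.prod_ne_zero_iff.mpr hya
    rw [Finset.prod_insert ha, Finset.prod_insert ha, Finset.sum_insert ha,
      Finset.erase_insert ha]
    have hsum : ∀ j ∈ s,
        (y j - b j) * (∏ l ∈ (insert a s).erase j, (y j - b l)) *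
          (∏ l ∈ (insert a s).erase j, (z - y l)) / (∏ l ∈ (insert a s).erase j, (y j - y l))
        = (y j - b j) * ((y j - b a) * ∏ l ∈ s.erase j, (y j - b l)) *
          ((z - y a) * ∏ l ∈ s.erase j, (z - y l)) /
          ((y j - y a) * ∏ l ∈ s.erase j, (y j - y l)) := by
      intro j hj
      have hne : a ≠ j := fun h => ha (h ▸ hj)
      have hanotin : a ∉ s.erase j := fun h => ha (Finset.mem_of_mem_erase h)
      rw [Finset.erase_insert_of_ne hne, Finset.prod_insert hanotin,
        Finset.prod_insert hanotin, Finset.prod_insert hanotin]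
    rw [Finset.sum_congr rfl hsum, IH hdists z, IH hdists (y a)]
    set Pz := ∏ l ∈ s, (z - y l) with hPz
    set Na := ∏ l ∈ s, (y a - y l) with hNa'
    have key : ∀ j ∈ s,
        (z - b a) * ((y j - b j) * (∏ l ∈ s.erase j, (y j - b l)) *
            (∏ l ∈ s.erase j, (z - y l)) / (∏ l ∈ s.erase j, (y j - y l)))
        = (y a - b a) * ((y j - b j) * (∏ l ∈ s.erase j, (y j - b l)) *
            (∏ l ∈ s.erase j, (y a - y l)) / (∏ l ∈ s.erase j, (y j - y l))) * Pz / Na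
          + (y j - b j) * ((y j - b a) * ∏ l ∈ s.erase j, (y j - b l)) *
            ((z - y a) * ∏ l ∈ s.erase j, (z - y l)) /
            ((y j - y a) * ∏ l ∈ s.erase j, (y j - y l)) := by
      intro j hj
      have hPzj : Pz = (z - y j) * ∏ l ∈ s.erase j, (z - y l) :=
        (Finset.mul_prod_erase s _ hj).symm
      have hNaj : Na = (y a - y j) * ∏ l ∈ s.erase j, (y a - y l) :=
        (Finset.mul_prod_erase s _ hj).symm
      have h1 : y a - y j ≠ 0 := hya j hj
      have h1' : y j - y a ≠ 0 := fun h => h1 (by linear_combination -h)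
      have hNAj : (∏ l ∈ s.erase j, (y a - y l)) ≠ 0 :=
        Finset.prod_ne_zero_iff.mpr fun l hl => hya l (Finset.mem_of_mem_erase hl)
      have hDj : (∏ l ∈ s.erase j, (y j - y l)) ≠ 0 :=
        Finset.prod_ne_zero_iff.mpr fun l hl =>
          sub_ne_zero.mpr (hdists j hj l (Finset.mem_of_mem_erase hl)
            (Finset.ne_of_mem_erase hl).symm)
      rw [hPzj, hNaj]
      field_simp
      ring
    have hkey2 : (z - b a) * (∑ j ∈ s, (y j - b j) * (∏ l ∈ s.erase j, (y j - b l)) *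
            (∏ l ∈ s.erase j, (z - y l)) / (∏ l ∈ s.erase j, (y j - y l)))
        = (y a - b a) * (∑ j ∈ s, (y j - b j) * (∏ l ∈ s.erase j, (y j - b l)) *
            (∏ l ∈ s.erase j, (y a - y l)) / (∏ l ∈ s.erase j, (y j - y l))) * Pz / Na
          + ∑ j ∈ s, (y j - b j) * ((y j - b a) * ∏ l ∈ s.erase j, (y j - b l)) *
            ((z - y a) * ∏ l ∈ s.erase j, (z - y l)) /
            ((y j - y a) * ∏ l ∈ s.erase j, (y j - y l)) := by
      rw [Finset.mul_sum, Finset.sum_congr rfl key, Finset.sum_add_distrib]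
      congr 1
      rw [Finset.mul_sum, Finset.sum_mul, Finset.sum_div]
    field_simp at hkey2 ⊢
    ring_nf at hkey2 ⊢
    linear_combination hkey2


theorem tpow_sum {K : Type*} [Field K] (t : K) (ht : t ≠ 0) (s : Finset ℕ) (f : ℕ → ℤ) :
    t ^ (∑ i ∈ s, f i) = ∏ i ∈ s, t ^ (f i) := by
  induction s using Finset.cons_induction with
  | empty => simp
  | cons a s ha IH => rw [Finset.sum_cons, Finset.prod_cons, zpow_add₀ ht, IH]


theorem dell_identity_x37 {K : Type*} [Field K] (t : K) (ht : t ≠ 0)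
    (N : ℕ) (hN : 2 ≤ N) (x : ℕ → K) (n : ℕ → ℤ)
    (hx : ∀ l ∈ Finset.Icc 2 N, x 1 - x l ≠ 0)
    (hden : ∀ j ∈ Finset.Icc 2 N, ∀ l ∈ Finset.Icc 2 N, j ≠ l →
      t ^ (n l) * x j - t ^ (n j) * x l ≠ 0) :
    ∏ l ∈ Finset.Icc 2 N, (t ^ (n l) * x 1 - t ^ (n 1) * x l) / (x 1 - x l)
      = t ^ (∑ i ∈ Finset.Icc 1 N, n i) *
        (t ^ (-(n 1)) * ∏ l ∈ Finset.Icc 2 N, (x 1 - t ^ (n 1) * x l) / (x 1 - x l)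
          + ∑ j ∈ Finset.Icc 2 N, t ^ (-(n j)) * ((t ^ (n j) - 1) * x j / (x 1 - x j)) *
              ∏ l ∈ (Finset.Icc 2 N).erase j,
                ((x j - t ^ (n j) * x l) / (t ^ (n l) * x j - t ^ (n j) * x l)) *
                  ((t ^ (n l) * x 1 - t ^ (n 1) * x l) / (x 1 - x l))) := by
  have ht0 : ∀ i : ℕ, t ^ (n i) ≠ 0 := fun i => zpow_ne_zero _ ht
  set s : Finset ℕ := Finset.Icc 2 N with hs
  set y : ℕ → K := fun i => x i / t ^ (n i) with hy
  set z : K := x 1 / t ^ (n 1) with hz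
  -- distinctness
  have hdist : ∀ j ∈ s, ∀ l ∈ s, j ≠ l → y j ≠ y l := by
    intro j hj l hl hjl h
    have h2 : x j * t ^ (n l) = x l * t ^ (n j) :=
      (div_eq_div_iff (ht0 j) (ht0 l)).mp h
    exact hden j hj l hl hjl (by linear_combination h2)
  have hyd : ∀ j ∈ s, ∀ l ∈ s.erase j, y j - y l ≠ 0 := fun j hj l hl =>
    sub_ne_zero.mpr (hdist j hj l (Finset.mem_of_mem_erase hl) (Finset.ne_of_mem_erase hl).symm)
  have hD : ∀ j ∈ s, (∏ l ∈ s.erase j, (y j - y l)) ≠ 0 := fun j hj =>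
    Finset.prod_ne_zero_iff.mpr (hyd j hj)
  have hP : (∏ l ∈ s, (x 1 - x l)) ≠ 0 := Finset.prod_ne_zero_iff.mpr hx
  have core := core_pf y x s hdist z
  -- eq1 : LHS in canonical form
  have hzz : t ^ (n 1) * z = x 1 := by
    rw [hz, mul_div_cancel₀ _ (ht0 1)]
  have hyy : ∀ l : ℕ, t ^ (n l) * y l = x l := by
    intro l
    show t ^ (n l) * (x l / t ^ (n l)) = x l
    rw [mul_div_cancel₀ _ (ht0 l)]
  have eq1 : ∏ l ∈ s, (t ^ (n l) * x 1 - t ^ (n 1) * x l) / (x 1 - x l)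
      = (∏ l ∈ s, (t ^ (n 1) * t ^ (n l))) * (∏ l ∈ s, (z - y l)) / (∏ l ∈ s, (x 1 - x l)) := by
    rw [← Finset.prod_mul_distrib, ← Finset.prod_div_distrib]
    refine Finset.prod_congr rfl fun l hl => ?_
    congr 1
    linear_combination (-(t ^ (n l))) * hzz + t ^ (n 1) * hyy l
  -- sum over Icc 1 N
  have hts : t ^ (∑ i ∈ Finset.Icc 1 N, n i) = t ^ (n 1) * ∏ l ∈ s, t ^ (n l) := by
    have h1 : Finset.Icc 1 N = insert 1 s := by
      rw [hs]; ext i; simp only [Finset.mem_Icc, Finset.mem_insert]; omega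
    have h1n : (1:ℕ) ∉ s := by rw [hs]; simp
    rw [h1, Finset.sum_insert h1n, zpow_add₀ ht, tpow_sum t ht]
  -- first RHS term
  have eqb : t ^ (-(n 1)) * ∏ l ∈ s, (x 1 - t ^ (n 1) * x l) / (x 1 - x l)
      = t ^ (-(n 1)) * ((∏ l ∈ s, t ^ (n 1)) * (∏ l ∈ s, (z - x l)) / (∏ l ∈ s, (x 1 - x l))) := by
    congr 1
    rw [← Finset.prod_mul_distrib, ← Finset.prod_div_distrib]
    refine Finset.prod_congr rfl fun l hl => ?_
    congr 1
    linear_combination -hzz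
  -- inner product of each sum term
  have eqc : ∀ j ∈ s, (∏ l ∈ s.erase j,
        ((x j - t ^ (n j) * x l) / (t ^ (n l) * x j - t ^ (n j) * x l)) *
          ((t ^ (n l) * x 1 - t ^ (n 1) * x l) / (x 1 - x l)))
      = (∏ l ∈ s.erase j, t ^ (n 1)) *
          ((∏ l ∈ s.erase j, (y j - x l)) * (∏ l ∈ s.erase j, (z - y l)) /
            (∏ l ∈ s.erase j, (y j - y l))) / (∏ l ∈ s.erase j, (x 1 - x l)) := by
    intro j hj
    rw [← Finset.prod_mul_distrib, ← Finset.prod_div_distrib, ← Finset.prod_mul_distrib,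
      ← Finset.prod_div_distrib]
    refine Finset.prod_congr rfl fun l hl => ?_
    have hls := Finset.mem_of_mem_erase hl
    have hd1 := hden j hj l hls (Finset.ne_of_mem_erase hl).symm
    have hx1 := hx l hls
    have hyl : y j - y l ≠ 0 := hyd j hj l hl
    rw [← hzz] at hx1 ⊢
    rw [← hyy j] at hd1 ⊢
    rw [← hyy l] at hd1 hx1 ⊢
    field_simp
  have hK0 : (∏ l ∈ s, (t ^ (n 1) * t ^ (n l))) = (∏ l ∈ s, t ^ (n 1)) * (∏ l ∈ s, t ^ (n l)) :=
    Finset.prod_mul_distrib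
  have eqsum : ∀ j ∈ s,
      (t ^ (n 1) * ∏ l ∈ s, t ^ (n l)) *
        (t ^ (-(n j)) * ((t ^ (n j) - 1) * x j / (x 1 - x j)) *
          ∏ l ∈ s.erase j, ((x j - t ^ (n j) * x l) / (t ^ (n l) * x j - t ^ (n j) * x l)) *
            ((t ^ (n l) * x 1 - t ^ (n 1) * x l) / (x 1 - x l)))
      = -((∏ l ∈ s, (t ^ (n 1) * t ^ (n l))) *
          ((y j - x j) * (∏ l ∈ s.erase j, (y j - x l)) * (∏ l ∈ s.erase j, (z - y l)) /
            (∏ l ∈ s.erase j, (y j - y l))) / (∏ l ∈ s, (x 1 - x l))) := by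
    intro j hj
    rw [eqc j hj]
    have hpt : (∏ l ∈ s, t ^ (n 1)) = t ^ (n 1) * ∏ l ∈ s.erase j, t ^ (n 1) :=
      (Finset.mul_prod_erase s _ hj).symm
    have hpP : (∏ l ∈ s, (x 1 - x l)) = (x 1 - x j) * ∏ l ∈ s.erase j, (x 1 - x l) :=
      (Finset.mul_prod_erase s _ hj).symm
    have hxj := hx j hj
    have hPj : (∏ l ∈ s.erase j, (x 1 - x l)) ≠ 0 :=
      Finset.prod_ne_zero_iff.mpr fun l hl => hx l (Finset.mem_of_mem_erase hl)
    have hDj := hD j hj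
    have htj := ht0 j
    have ht1 := ht0 1
    rw [hK0, hpt, hpP, zpow_neg]
    rw [← hyy j] at hxj ⊢
    field_simp
    ring
  rw [hts, eq1, mul_add, Finset.mul_sum, eqb, Finset.sum_congr rfl eqsum]
  rw [Finset.sum_neg_distrib, ← Finset.sum_div, ← Finset.mul_sum, zpow_neg, hK0]
  have hc : t ^ (n 1) * (t ^ (n 1))⁻¹ = 1 := mul_inv_cancel₀ (ht0 1)
  linear_combination
    (-((∏ l ∈ s, t ^ (n 1)) * (∏ l ∈ s, t ^ (n l)) * (∏ l ∈ s, (z - x l)) /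
        (∏ l ∈ s, (x 1 - x l)))) * hc
    + (-(((∏ l ∈ s, t ^ (n 1)) * (∏ l ∈ s, t ^ (n l))) / (∏ l ∈ s, (x 1 - x l)))) * core
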